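/- If f ∈ ℝ[x,y] is a polynomial of degree n whose degree-n homogeneous part f_n is hyperbolic (i.e., Hess f_n has no real linear factors and Hess f_n ≤ 0 everywhere), then the Hessian curve {(x,y) ∈ ℝ² : Hess f(x,y) = 0} is a compact subset of ℝ². -/

import Mathlib

open MvPolynomial

/-- The Hessian determinant `f_xx f_yy - f_xy ^ 2` of a polynomial in two variables. -/
noncomputable def Hess (P : MvPolynomial (Fin 2) ℝ) : MvPolynomial (Fin 2) ℝ :=
  pderiv 0 (pderiv 0 P) * pderiv 1 (pderiv 1 P) - (pderiv 0 (pderiv 1 P)) ^ 2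

section Aux

variable {σ : Type*}

lemma degree_of_mem_support {p : MvPolynomial σ ℝ} {n : ℕ} (hp : p.IsHomogeneous n)
    {d : σ →₀ ℕ} (hd : d ∈ p.support) : d.degree = n := by
  rw [Finsupp.degree_eq_weight_one]
  exact hp (MvPolynomial.mem_support_iff.mp hd)

lemma degree_sub_single_add {i : σ} {d : σ →₀ ℕ} (h : d i ≠ 0) :
    (d - Finsupp.single i 1).degree + 1 = d.degree := by
  classical
  have hle : Finsupp.single i 1 ≤ d := by
    rw [Finsupp.single_le_iff]; omega
  have hadd : (d - Finsupp.single i 1) + Finsupp.single i 1 = d := tsub_add_cancel_of_le hle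
  have h1 : (Finsupp.single i 1).degree = 1 := by
    simp [Finsupp.degree_apply, Finsupp.support_single_ne_zero _ one_ne_zero]
  calc (d - Finsupp.single i 1).degree + 1
      = (d - Finsupp.single i 1).degree + (Finsupp.single i 1).degree := by rw [h1]
    _ = d.degree := by
        simp only [Finsupp.degree_eq_weight_one]
        rw [← map_add, hadd]

lemma isHomogeneous_pderiv {p : MvPolynomial σ ℝ} {n : ℕ} (hp : p.IsHomogeneous n) (i : σ) :
    (pderiv i p).IsHomogeneous (n - 1) := by
  classical
  conv_lhs => rw [p.as_sum]
  rw [map_sum]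
  apply MvPolynomial.IsHomogeneous.sum
  intro d hd
  rw [pderiv_monomial]
  by_cases h : d i = 0
  · simp [h, isHomogeneous_zero]
  · apply isHomogeneous_monomial
    have := degree_sub_single_add h
    have hdeg := degree_of_mem_support hp hd
    omega

lemma totalDegree_pderiv_le (p : MvPolynomial σ ℝ) (i : σ) :
    (pderiv i p).totalDegree ≤ p.totalDegree - 1 := by
  classical
  conv_lhs => rw [p.as_sum]
  rw [map_sum]
  refine (MvPolynomial.totalDegree_finset_sum _ _).trans (Finset.sup_le ?_)
  intro d hd
  rw [pderiv_monomial]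
  by_cases h : d i = 0
  · simp [h]
  · refine (totalDegree_monomial_le _ _).trans ?_
    have h1 := degree_sub_single_add h
    have h2 : d.degree ≤ p.totalDegree := by
      have := MvPolynomial.le_totalDegree hd
      simpa [Finsupp.degree_apply, Finsupp.sum] using this
    have : ((d - Finsupp.single i 1).sum fun _ => id) = (d - Finsupp.single i 1).degree := by
      simp [Finsupp.degree_apply, Finsupp.sum]
    omega

lemma eval_smul_of_isHomogeneous {p : MvPolynomial σ ℝ} {n : ℕ} (hp : p.IsHomogeneous n)
    (c : ℝ) (v : σ → ℝ) : eval (fun i => c * v i) p = c ^ n * eval v p := by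
  rw [eval_eq, eval_eq, Finset.mul_sum]
  refine Finset.sum_congr rfl fun d hd => ?_
  have hdeg : d.degree = n := degree_of_mem_support hp hd
  rw [← hdeg]
  simp_rw [mul_pow]
  rw [Finset.prod_mul_distrib, Finset.prod_pow_eq_pow_sum]
  simp only [Finsupp.degree_apply]
  ring

lemma exists_growth_bound (p : MvPolynomial σ ℝ) [NormedAddCommGroup (σ → ℝ)]
    (hnorm : ∀ (v : σ → ℝ) (i : σ), |v i| ≤ ‖v‖) :
    ∃ C : ℝ, 0 < C ∧ ∀ v : σ → ℝ, |eval v p| ≤ C * (max 1 ‖v‖) ^ p.totalDegree := by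
  refine ⟨(∑ d ∈ p.support, |coeff d p|) + 1, by positivity, fun v => ?_⟩
  set M := max 1 ‖v‖ with hMdef
  have hM1 : (1:ℝ) ≤ M := le_max_left _ _
  have hM0 : (0:ℝ) ≤ M := by linarith
  rw [eval_eq]
  have step : ∀ d ∈ p.support,
      |coeff d p * ∏ i ∈ d.support, v i ^ d i| ≤ |coeff d p| * M ^ p.totalDegree := by
    intro d hd
    rw [abs_mul]
    refine mul_le_mul_of_nonneg_left ?_ (abs_nonneg _)
    calc |∏ i ∈ d.support, v i ^ d i| = ∏ i ∈ d.support, |v i| ^ d i := by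
          rw [Finset.abs_prod]; simp [abs_pow]
      _ ≤ ∏ i ∈ d.support, M ^ d i := by
          refine Finset.prod_le_prod (fun i _ => by positivity) fun i _ => ?_
          exact pow_le_pow_left₀ (abs_nonneg _) ((hnorm v i).trans (le_max_right _ _)) _
      _ = M ^ d.degree := by rw [Finset.prod_pow_eq_pow_sum]; rfl
      _ ≤ M ^ p.totalDegree := by
          refine pow_le_pow_right₀ hM1 ?_
          have := MvPolynomial.le_totalDegree hd
          simpa [Finsupp.degree_apply, Finsupp.sum] using this
  calc |∑ d ∈ p.support, coeff d p * ∏ i ∈ d.support, v i ^ d i|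
      ≤ ∑ d ∈ p.support, |coeff d p * ∏ i ∈ d.support, v i ^ d i| :=
        Finset.abs_sum_le_sum_abs _ _
    _ ≤ ∑ d ∈ p.support, |coeff d p| * M ^ p.totalDegree := Finset.sum_le_sum step
    _ = (∑ d ∈ p.support, |coeff d p|) * M ^ p.totalDegree := by rw [← Finset.sum_mul]
    _ ≤ ((∑ d ∈ p.support, |coeff d p|) + 1) * M ^ p.totalDegree := by
        have : (0:ℝ) ≤ M ^ p.totalDegree := by positivity
        nlinarith

lemma totalDegree_sub_le (a b : MvPolynomial σ ℝ) :
    (a - b).totalDegree ≤ max a.totalDegree b.totalDegree := by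
  rw [sub_eq_add_neg]
  refine (MvPolynomial.totalDegree_add _ _).trans ?_
  rw [MvPolynomial.totalDegree_neg]

end Aux

/-- If the leading homogeneous part `f_n` of `f` is hyperbolic (its Hessian is
nonpositive everywhere and vanishes only at the origin), then the Hessian curve
of `f` is compact. -/
theorem hessian_curve_compact_of_hyperbolic (n : ℕ) (hn : 3 ≤ n)
    (f : MvPolynomial (Fin 2) ℝ) (hdeg : f.totalDegree = n)
    (hNonpos : ∀ v : Fin 2 → ℝ, eval v (Hess (homogeneousComponent n f)) ≤ 0)
    (hOnlyOrigin : ∀ v : Fin 2 → ℝ, eval v (Hess (homogeneousComponent n f)) = 0 → v = 0) :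
    IsCompact {v : Fin 2 → ℝ | eval v (Hess f) = 0} := by
  classical
  set g := homogeneousComponent n f with hgdef
  have hgh : g.IsHomogeneous n := homogeneousComponent_isHomogeneous n f
  set r : MvPolynomial (Fin 2) ℝ := f - g with hrdef
  have hfr : f = g + r := by rw [hrdef]; ring
  -- degree of r is at most n - 1
  have hr : r.totalDegree ≤ n - 1 := by
    refine Finset.sup_le fun d hd => ?_
    have hcr : coeff d r ≠ 0 := MvPolynomial.mem_support_iff.mp hd
    have hdd : (d.sum fun _ e => e) = d.degree := by simp [Finsupp.degree_apply, Finsupp.sum]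
    rw [hdd]
    by_contra hlt
    push_neg at hlt
    have hge : n ≤ d.degree := by omega
    rcases eq_or_lt_of_le hge with heq | hgt
    · apply hcr
      rw [hrdef, MvPolynomial.coeff_sub, hgdef, coeff_homogeneousComponent, if_pos heq.symm,
        sub_self]
    · have h1 : coeff d f = 0 := by
        apply coeff_eq_zero_of_totalDegree_lt
        rw [hdeg]
        simpa [Finsupp.degree_apply] using hgt
      apply hcr
      rw [hrdef, MvPolynomial.coeff_sub, hgdef, coeff_homogeneousComponent,
        if_neg (by omega), h1, sub_self]
  -- Hess g is homogeneous of degree 2*(n-2)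
  set m := 2 * (n - 2) with hmdef
  have hHg : (Hess g).IsHomogeneous m := by
    unfold Hess
    apply MvPolynomial.IsHomogeneous.sub
    · have h1 := (isHomogeneous_pderiv (isHomogeneous_pderiv hgh 0) 0).mul
        (isHomogeneous_pderiv (isHomogeneous_pderiv hgh 1) 1)
      have : n - 1 - 1 + (n - 1 - 1) = m := by omega
      rwa [this] at h1
    · have h1 := (isHomogeneous_pderiv (isHomogeneous_pderiv hgh 1) 0).pow 2
      have : n - 1 - 1 - 1 + 1 = n - 1 - 1 := by omega
      have h2 : (n - 1 - 1) * 2 = m := by omega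
      rwa [h2] at h1
  -- the error term E has total degree ≤ 2n - 5
  set E : MvPolynomial (Fin 2) ℝ := Hess f - Hess g with hEdef
  have hEeq : E = pderiv 0 (pderiv 0 g) * pderiv 1 (pderiv 1 r)
      + pderiv 0 (pderiv 0 r) * pderiv 1 (pderiv 1 g)
      + pderiv 0 (pderiv 0 r) * pderiv 1 (pderiv 1 r)
      - (2 * (pderiv 0 (pderiv 1 g)) * (pderiv 0 (pderiv 1 r))
        + (pderiv 0 (pderiv 1 r)) ^ 2) := by
    rw [hEdef]
    conv_lhs => rw [hfr]
    unfold Hess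
    simp only [map_add]
    ring
  have hgd2 : ∀ i j : Fin 2, (pderiv i (pderiv j g)).totalDegree ≤ n - 2 := by
    intro i j
    have h1 := totalDegree_pderiv_le (pderiv j g) i
    have h2 := totalDegree_pderiv_le g j
    have h3 := hgh.totalDegree_le
    omega
  have hrd2 : ∀ i j : Fin 2, (pderiv i (pderiv j r)).totalDegree ≤ n - 3 := by
    intro i j
    have h1 := totalDegree_pderiv_le (pderiv j r) i
    have h2 := totalDegree_pderiv_le r j
    omega
  have hE : E.totalDegree ≤ 2 * n - 5 := by
    rw [hEeq]
    refine (totalDegree_sub_le _ _).trans (max_le ?_ ?_)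
    · refine (MvPolynomial.totalDegree_add _ _).trans (max_le
        ((MvPolynomial.totalDegree_add _ _).trans (max_le ?_ ?_)) ?_)
      · have := (MvPolynomial.totalDegree_mul (pderiv 0 (pderiv 0 g)) (pderiv 1 (pderiv 1 r)))
        have h1 := hgd2 0 0; have h2 := hrd2 1 1; omega
      · have := (MvPolynomial.totalDegree_mul (pderiv 0 (pderiv 0 r)) (pderiv 1 (pderiv 1 g)))
        have h1 := hrd2 0 0; have h2 := hgd2 1 1; omega
      · have := (MvPolynomial.totalDegree_mul (pderiv 0 (pderiv 0 r)) (pderiv 1 (pderiv 1 r)))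
        have h1 := hrd2 0 0; have h2 := hrd2 1 1; omega
    · refine (MvPolynomial.totalDegree_add _ _).trans (max_le ?_ ?_)
      · have t1 := MvPolynomial.totalDegree_mul (2 * pderiv 0 (pderiv 1 g)) (pderiv 0 (pderiv 1 r))
        have t2 := MvPolynomial.totalDegree_mul (2 : MvPolynomial (Fin 2) ℝ) (pderiv 0 (pderiv 1 g))
        have t3 : (2 : MvPolynomial (Fin 2) ℝ).totalDegree = 0 := by
          rw [show (2 : MvPolynomial (Fin 2) ℝ) = C 2 from (map_ofNat C 2).symm,
            MvPolynomial.totalDegree_C]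
        have h1 := hgd2 0 1; have h2 := hrd2 0 1
        rw [mul_assoc] at t1 ⊢
        have t1' := MvPolynomial.totalDegree_mul (2 : MvPolynomial (Fin 2) ℝ)
          (pderiv 0 (pderiv 1 g) * pderiv 0 (pderiv 1 r))
        have t4 := MvPolynomial.totalDegree_mul (pderiv 0 (pderiv 1 g)) (pderiv 0 (pderiv 1 r))
        omega
      · have t1 : ((pderiv 0 (pderiv 1 r)) ^ 2 : MvPolynomial (Fin 2) ℝ)
            = pderiv 0 (pderiv 1 r) * pderiv 0 (pderiv 1 r) := sq _
        rw [t1]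
        have := MvPolynomial.totalDegree_mul (pderiv 0 (pderiv 1 r)) (pderiv 0 (pderiv 1 r))
        have h2 := hrd2 0 1
        omega
  -- norm facts
  have hnorm : ∀ (v : Fin 2 → ℝ) (i : Fin 2), |v i| ≤ ‖v‖ := by
    intro v i
    simpa [Real.norm_eq_abs] using norm_le_pi_norm v i
  -- negative maximum on the sphere
  have hKc : IsCompact (Metric.sphere (0 : Fin 2 → ℝ) 1) := isCompact_sphere _ _
  have hKne : (Metric.sphere (0 : Fin 2 → ℝ) 1).Nonempty :=
    NormedSpace.sphere_nonempty.mpr zero_le_one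
  obtain ⟨u₀, hu₀K, hmax⟩ := hKc.exists_isMaxOn hKne
    (MvPolynomial.continuous_eval (p := Hess g)).continuousOn
  set ε : ℝ := -(eval u₀ (Hess g)) with hεdef
  have hu₀norm : ‖u₀‖ = 1 := by simpa using hu₀K
  have hu₀ne : u₀ ≠ 0 := by
    intro h; rw [h, norm_zero] at hu₀norm; norm_num at hu₀norm
  have hε : 0 < ε := by
    rw [hεdef, neg_pos]
    rcases lt_or_eq_of_le (hNonpos u₀) with h | h
    · exact h
    · exact absurd (hOnlyOrigin u₀ h) hu₀ne
  have hsphere : ∀ v : Fin 2 → ℝ, ‖v‖ = 1 → eval v (Hess g) ≤ -ε := by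
    intro v hv
    have : v ∈ Metric.sphere (0 : Fin 2 → ℝ) 1 := by simpa using hv
    simpa [hεdef] using hmax this
  -- scaling estimate
  have hscale : ∀ v : Fin 2 → ℝ, v ≠ 0 → eval v (Hess g) ≤ -ε * ‖v‖ ^ m := by
    intro v hv
    have hc : 0 < ‖v‖ := norm_pos_iff.mpr hv
    set c := ‖v‖ with hcdef
    set u : Fin 2 → ℝ := c⁻¹ • v with hudef
    have hunorm : ‖u‖ = 1 := by
      rw [hudef, norm_smul, norm_inv, Real.norm_eq_abs, abs_of_pos hc, ← hcdef,
        inv_mul_cancel₀ hc.ne']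
    have hvu : v = fun i => c * u i := by
      funext i
      rw [hudef]
      simp [Pi.smul_apply, smul_eq_mul]
      field_simp
    rw [hvu, eval_smul_of_isHomogeneous hHg c u]
    have h1 : eval u (Hess g) ≤ -ε := hsphere u hunorm
    have h2 : (0:ℝ) < c ^ m := by positivity
    nlinarith
  -- growth bound for E
  obtain ⟨C, hC, hCb⟩ := exists_growth_bound E hnorm
  -- outside a ball, Hess f is negative
  set R : ℝ := max 1 (C / ε) with hRdef
  have hout : ∀ v : Fin 2 → ℝ, R < ‖v‖ → eval v (Hess f) < 0 := by
    intro v hvR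
    have hc1 : (1:ℝ) < ‖v‖ := lt_of_le_of_lt (le_max_left _ _) hvR
    have hc0 : (0:ℝ) < ‖v‖ := by linarith
    have hvne : v ≠ 0 := by
      intro h; rw [h, norm_zero] at hc0; exact lt_irrefl _ hc0
    have hsplit : eval v (Hess f) = eval v (Hess g) + eval v E := by
      rw [hEdef, map_sub]; ring
    have h1 : eval v (Hess g) ≤ -ε * ‖v‖ ^ m := hscale v hvne
    have h2 : eval v E ≤ C * ‖v‖ ^ (2 * n - 5) := by
      have hb := hCb v
      have hmax1 : max 1 ‖v‖ = ‖v‖ := max_eq_right hc1.le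
      rw [hmax1] at hb
      calc eval v E ≤ |eval v E| := le_abs_self _
        _ ≤ C * ‖v‖ ^ E.totalDegree := hb
        _ ≤ C * ‖v‖ ^ (2 * n - 5) := by
            refine mul_le_mul_of_nonneg_left (pow_le_pow_right₀ hc1.le hE) hC.le
    have hm : m = (2 * n - 5) + 1 := by omega
    have h3 : ‖v‖ ^ m = ‖v‖ ^ (2 * n - 5) * ‖v‖ := by rw [hm, pow_succ]
    have h4 : C < ε * ‖v‖ := by
      have : C / ε < ‖v‖ := lt_of_le_of_lt (le_max_right _ _) hvR
      rw [div_lt_iff₀ hε] at this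
      linarith [this]
    have h5 : (0:ℝ) < ‖v‖ ^ (2 * n - 5) := by positivity
    rw [hsplit]
    calc eval v (Hess g) + eval v E
        ≤ -ε * (‖v‖ ^ (2 * n - 5) * ‖v‖) + C * ‖v‖ ^ (2 * n - 5) := by
          rw [← h3]; linarith
      _ < 0 := by nlinarith
  -- conclude compactness
  have hclosed : IsClosed {v : Fin 2 → ℝ | eval v (Hess f) = 0} :=
    isClosed_singleton.preimage (MvPolynomial.continuous_eval (p := Hess f))
  have hsub : {v : Fin 2 → ℝ | eval v (Hess f) = 0} ⊆ Metric.closedBall (0 : Fin 2 → ℝ) R := by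
    intro v hv
    rw [Metric.mem_closedBall, dist_zero_right]
    by_contra h
    push_neg at h
    exact absurd hv.out (ne_of_lt (hout v h))
  exact (isCompact_closedBall (0 : Fin 2 → ℝ) R).of_isClosed_subset hclosed hsub
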